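/- Let X be a proper metric space (closed bounded sets are compact) and let u : X → ℝ be a continuous function with u ≥ 0. Let y₀ ∈ X be such that P₀ := u(y₀) > 0, and let A₀ > 0. Then there exists x₀ ∈ X with dist(x₀, y₀) < 2·A₀·P₀^(−1/2), such that Q₀ := u(x₀) ≥ P₀ and u(x) ≤ 4·Q₀ for every x ∈ X with dist(x, x₀) < A₀·Q₀^(−1/2). -/

import Mathlib

/-- Perelman's point selection lemma on a proper metric space:
given a continuous nonnegative function `u`, a point `y₀` with `u y₀ > 0`,
and `A₀ > 0`, there is a nearby point `x₀` with `u x₀ ≥ u y₀` such that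
`u ≤ 4 * u x₀` on the ball of radius `A₀ * (u x₀)^(-1/2)` about `x₀`. -/
theorem perelman_point_selection
    {X : Type*} [MetricSpace X] [ProperSpace X]
    (u : X → ℝ) (hu_cont : Continuous u) (hu_nonneg : ∀ x, 0 ≤ u x)
    (y₀ : X) (hP₀ : 0 < u y₀) (A₀ : ℝ) (hA₀ : 0 < A₀) :
    ∃ x₀ : X, dist x₀ y₀ < 2 * A₀ * (u y₀) ^ (-(1/2 : ℝ)) ∧
      u y₀ ≤ u x₀ ∧
      ∀ x : X, dist x x₀ < A₀ * (u x₀) ^ (-(1/2 : ℝ)) → u x ≤ 4 * u x₀ := by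
  set P₀ := u y₀ with hP₀def
  set R := 2 * A₀ * P₀ ^ (-(1/2 : ℝ)) with hRdef
  -- the selection set
  set S : Set X := {x | P₀ ≤ u x ∧
      dist x y₀ ≤ 2 * A₀ * (P₀ ^ (-(1/2 : ℝ)) - (u x) ^ (-(1/2 : ℝ)))} with hSdef
  have hy₀S : y₀ ∈ S := by
    refine ⟨le_refl _, ?_⟩
    simp [hP₀def]
  have hposS : ∀ x ∈ S, 0 < u x := fun x hx => lt_of_lt_of_le hP₀ hx.1
  have hSsub : S ⊆ Metric.closedBall y₀ R := by
    intro x hx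
    have h1 : 0 ≤ (u x) ^ (-(1/2 : ℝ)) := Real.rpow_nonneg (hu_nonneg x) _
    have := hx.2
    simp only [Metric.mem_closedBall]
    nlinarith
  -- u is bounded on S
  obtain ⟨M, hM⟩ : BddAbove (u '' S) := by
    refine BddAbove.mono (Set.image_mono hSsub) ?_
    exact ((isCompact_closedBall y₀ R).image hu_cont).bddAbove
  have hne : (u '' S).Nonempty := ⟨u y₀, y₀, hy₀S, rfl⟩
  set M' := sSup (u '' S) with hM'def
  have hM'ge : P₀ ≤ M' := le_csSup ⟨M, hM⟩ ⟨y₀, hy₀S, rfl⟩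
  have hM'pos : 0 < M' := lt_of_lt_of_le hP₀ hM'ge
  -- pick x₀ ∈ S with u x₀ > M'/4
  obtain ⟨v, ⟨x₀, hx₀S, rfl⟩, hv⟩ : ∃ v ∈ u '' S, M' / 4 < v :=
    exists_lt_of_lt_csSup hne (by linarith)
  have hQpos : 0 < u x₀ := hposS x₀ hx₀S
  refine ⟨x₀, ?_, hx₀S.1, ?_⟩
  · have h1 : 0 < (u x₀) ^ (-(1/2 : ℝ)) := Real.rpow_pos_of_pos hQpos _
    have := hx₀S.2
    rw [hRdef] at *
    nlinarith
  · intro x hdx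
    by_contra hcon
    push_neg at hcon
    -- then x ∈ S, with u x > M', contradiction
    have hux4 : 4 * u x₀ < u x := hcon
    have hxS : x ∈ S := by
      constructor
      · have := hx₀S.1; linarith
      · have h4 : ((4 : ℝ) * u x₀) ^ (-(1/2 : ℝ)) =
            (1/2) * (u x₀) ^ (-(1/2 : ℝ)) := by
          rw [Real.mul_rpow (by norm_num) hQpos.le]
          congr 1
          rw [show (4:ℝ) = 2 ^ (2:ℕ) by norm_num, ← Real.rpow_natCast 2 2,
            ← Real.rpow_mul (by norm_num)]
          norm_num
        have hmono : (u x) ^ (-(1/2 : ℝ)) ≤ ((4 : ℝ) * u x₀) ^ (-(1/2 : ℝ)) :=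
          Real.rpow_le_rpow_of_nonpos (by linarith) hux4.le (by norm_num)
        rw [h4] at hmono
        have htri : dist x y₀ ≤ dist x x₀ + dist x₀ y₀ := dist_triangle x x₀ y₀
        have h2 := hx₀S.2
        nlinarith
    have : u x ≤ M' := le_csSup ⟨M, hM⟩ ⟨x, hxS, rfl⟩
    linarith
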